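/- Let A, B, C be three non-collinear points in the Euclidean plane, with incenter I and excenters E_A, E_B, E_C. Then dist(E_A,E_B) · dist(E_A,C) = dist(E_A,A) · dist(E_A,I) and dist(E_A,A) · dist(E_A,I) = dist(E_A,E_C) · dist(E_A,B). -/

import Mathlib

/-- The incenter of the triangle `A B C`. -/
noncomputable def incenterPt (A B C : EuclideanSpace ℝ (Fin 2)) : EuclideanSpace ℝ (Fin 2) :=
  (dist B C + dist C A + dist A B)⁻¹ •
    (dist B C • A + dist C A • B + dist A B • C)

/-- The excenter of the triangle `A B C` opposite the first vertex `A`. -/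
noncomputable def excenterPt (A B C : EuclideanSpace ℝ (Fin 2)) : EuclideanSpace ℝ (Fin 2) :=
  (-dist B C + dist C A + dist A B)⁻¹ •
    ((-dist B C) • A + dist C A • B + dist A B • C)

lemma norm_comb_sq (u v : EuclideanSpace ℝ (Fin 2)) (x y a b c : ℝ)
    (ha : ‖u‖ = a) (hb : ‖v‖ = b) (hc : ‖u - v‖ = c) :
    ‖x • u + y • v‖ ^ 2 = x^2*a^2 + y^2*b^2 + x*y*(a^2+b^2-c^2) := by
  have h1 : ‖x • u + y • v‖ ^ 2
      = x^2*‖u‖^2 + 2*(x*y)*(inner ℝ u v : ℝ) + y^2*‖v‖^2 := by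
    rw [norm_add_sq_real, norm_smul, norm_smul, real_inner_smul_left, real_inner_smul_right,
      mul_pow, mul_pow, Real.norm_eq_abs, Real.norm_eq_abs, sq_abs, sq_abs]
    ring
  have h2 : ‖u - v‖ ^ 2 = ‖u‖^2 - 2*(inner ℝ u v : ℝ) + ‖v‖^2 := norm_sub_sq_real u v
  rw [ha, hb, hc] at h2
  have hg : (inner ℝ u v : ℝ) = (a^2+b^2-c^2)/2 := by linarith
  rw [h1, ha, hb, hg]; ring

/-- The power-of-a-point identities at the excenter `E_A`:
`|E_A E_B|·|E_A C| = |E_A A|·|E_A I| = |E_A E_C|·|E_A B|`. -/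
theorem power_of_point_at_excenter (A B C : EuclideanSpace ℝ (Fin 2))
    (h : AffineIndependent ℝ ![A, B, C])
    (I : EuclideanSpace ℝ (Fin 2)) (hI : I = incenterPt A B C)
    (EA : EuclideanSpace ℝ (Fin 2)) (hEA : EA = excenterPt A B C)
    (EB : EuclideanSpace ℝ (Fin 2)) (hEB : EB = excenterPt B C A)
    (EC : EuclideanSpace ℝ (Fin 2)) (hEC : EC = excenterPt C A B) :
    dist EA EB * dist EA C = dist EA A * dist EA I ∧
    dist EA A * dist EA I = dist EA EC * dist EA B := by
  have hncol : ¬ Collinear ℝ ({A, B, C} : Set (EuclideanSpace ℝ (Fin 2))) :=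
    affineIndependent_iff_not_collinear_set.1 h
  simp only [incenterPt, excenterPt] at hI hEA hEB hEC
  set a := dist B C with ha
  set b := dist C A with hb
  set c := dist A B with hc
  -- strict triangle inequalities
  have hpA : (0:ℝ) < -a + b + c := by
    have h1 : dist B C ≤ dist B A + dist A C := dist_triangle _ _ _
    have h2 : dist B A + dist A C ≠ dist B C := by
      intro he
      exact hncol (by
        have := (dist_add_dist_eq_iff.1 he).collinear
        rwa [Set.insert_comm] at this)
    have : dist B C < dist B A + dist A C := lt_of_le_of_ne h1 (Ne.symm h2)
    rw [dist_comm B A, dist_comm A C] at this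
    rw [ha, hb, hc]; linarith
  have hpB : (0:ℝ) < -b + c + a := by
    have h1 : dist C A ≤ dist C B + dist B A := dist_triangle _ _ _
    have h2 : dist C B + dist B A ≠ dist C A := by
      intro he
      exact hncol (by
        have := (dist_add_dist_eq_iff.1 he).collinear
        have heq : ({C, B, A} : Set (EuclideanSpace ℝ (Fin 2))) = {A, B, C} := by
          ext x; simp; tauto
        rwa [heq] at this)
    have : dist C A < dist C B + dist B A := lt_of_le_of_ne h1 (Ne.symm h2)
    rw [dist_comm C B, dist_comm B A] at this
    rw [ha, hb, hc]; linarith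
  have hpC : (0:ℝ) < -c + a + b := by
    have h1 : dist A B ≤ dist A C + dist C B := dist_triangle _ _ _
    have h2 : dist A C + dist C B ≠ dist A B := by
      intro he
      exact hncol (by
        have := (dist_add_dist_eq_iff.1 he).collinear
        have heq : ({A, C, B} : Set (EuclideanSpace ℝ (Fin 2))) = {A, B, C} := by
          ext x; simp; tauto
        rwa [heq] at this)
    have : dist A B < dist A C + dist C B := lt_of_le_of_ne h1 (Ne.symm h2)
    rw [dist_comm A C, dist_comm C B] at this
    rw [ha, hb, hc]; linarith
  have hs : (0:ℝ) < a + b + c := by linarith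
  -- cleared forms of the centers
  have hnEA : (-a+b+c) • EA = (-a) • A + b • B + c • C := by
    rw [hEA, smul_smul, mul_inv_cancel₀ hpA.ne', one_smul]
  have hnEB : (-b+c+a) • EB = (-b) • B + c • C + a • A := by
    rw [hEB, smul_smul, mul_inv_cancel₀ hpB.ne', one_smul]
  have hnEC : (-c+a+b) • EC = (-c) • C + a • A + b • B := by
    rw [hEC, smul_smul, mul_inv_cancel₀ hpC.ne', one_smul]
  have hnI : (a+b+c) • I = a • A + b • B + c • C := by
    rw [hI, smul_smul, mul_inv_cancel₀ hs.ne', one_smul]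
  -- vector identities
  have e1 : (-b+c+a) • (EA - EB) = (2*c) • (EA - C) := by
    apply smul_right_injective (EuclideanSpace ℝ (Fin 2)) hpA.ne'
    show (-a+b+c) • ((-b+c+a) • (EA - EB)) = (-a+b+c) • ((2*c) • (EA - C))
    linear_combination (norm := module) ((-b+c+a) - 2*c) • hnEA - ((-a+b+c):ℝ) • hnEB
  have e5 : (-c+a+b) • (EA - EC) = (2*b) • (EA - B) := by
    apply smul_right_injective (EuclideanSpace ℝ (Fin 2)) hpA.ne'
    show (-a+b+c) • ((-c+a+b) • (EA - EC)) = (-a+b+c) • ((2*b) • (EA - B))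
    linear_combination (norm := module) ((-c+a+b) - 2*b) • hnEA - ((-a+b+c):ℝ) • hnEC
  have eI : (a+b+c) • (EA - I) = (2*a) • (EA - A) := by
    apply smul_right_injective (EuclideanSpace ℝ (Fin 2)) hpA.ne'
    show (-a+b+c) • ((a+b+c) • (EA - I)) = (-a+b+c) • ((2*a) • (EA - A))
    linear_combination (norm := module) ((a+b+c) - 2*a) • hnEA - ((-a+b+c):ℝ) • hnI
  have e2 : (-a+b+c) • (EA - C) = b • (B - C) + (-a) • (A - C) := by
    linear_combination (norm := module) hnEA
  have e4 : (-a+b+c) • (EA - A) = b • (B - A) + c • (C - A) := by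
    linear_combination (norm := module) hnEA
  have e6 : (-a+b+c) • (EA - B) = c • (C - B) + (-a) • (A - B) := by
    linear_combination (norm := module) hnEA
  -- norm facts
  have hna : ‖B - C‖ = a := by rw [ha]; exact (dist_eq_norm B C).symm
  have hnb : ‖A - C‖ = b := by rw [hb, dist_comm]; exact (dist_eq_norm A C).symm
  have hnc : ‖A - B‖ = c := by rw [hc]; exact (dist_eq_norm A B).symm
  -- squared distance identities
  have habs : ∀ (p : ℝ) (v : EuclideanSpace ℝ (Fin 2)), 0 < p → ‖p • v‖ ^ 2 = p^2 * ‖v‖^2 := by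
    intro p v hp
    rw [norm_smul, Real.norm_eq_abs, mul_pow, sq_abs]
  have h3 : (-a+b+c) * (dist EA C)^2 = a*b*(-b+c+a) := by
    apply mul_left_cancel₀ hpA.ne'
    have hq : (-a+b+c)^2 * ‖EA - C‖^2
        = b^2*a^2 + (-a)^2*b^2 + b*(-a)*(a^2+b^2-c^2) := by
      rw [← habs _ _ hpA, e2]
      exact norm_comb_sq _ _ b (-a) a b c hna hnb
        (by rw [show (B - C) - (A - C) = -(A - B) by abel, norm_neg, hnc])
    rw [dist_eq_norm]
    linear_combination hq
  have h4 : (-a+b+c) * (dist EA A)^2 = b*c*(a+b+c) := by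
    apply mul_left_cancel₀ hpA.ne'
    have hq : (-a+b+c)^2 * ‖EA - A‖^2
        = b^2*c^2 + c^2*b^2 + b*c*(c^2+b^2-a^2) := by
      rw [← habs _ _ hpA, e4]
      exact norm_comb_sq _ _ b c c b a
        (by rw [show (B - A : EuclideanSpace ℝ (Fin 2)) = -(A - B) by abel, norm_neg, hnc])
        (by rw [show (C - A : EuclideanSpace ℝ (Fin 2)) = -(A - C) by abel, norm_neg, hnb])
        (by rw [show (B - A) - (C - A) = -(C - B) by abel, norm_neg, ← dist_eq_norm, dist_comm, ha])
    rw [dist_eq_norm]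
    linear_combination hq
  have h6 : (-a+b+c) * (dist EA B)^2 = a*c*(-c+a+b) := by
    apply mul_left_cancel₀ hpA.ne'
    have hq : (-a+b+c)^2 * ‖EA - B‖^2
        = c^2*a^2 + (-a)^2*c^2 + c*(-a)*(a^2+c^2-b^2) := by
      rw [← habs _ _ hpA, e6]
      exact norm_comb_sq _ _ c (-a) a c b
        (by rw [show (C - B : EuclideanSpace ℝ (Fin 2)) = -(B - C) by abel, norm_neg, hna])
        hnc
        (by rw [show (C - B) - (A - B) = -(A - C) by abel, norm_neg, hnb])
    rw [dist_eq_norm]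
    linear_combination hq
  -- linear distance identities
  have hd1 : (-b+c+a) * dist EA EB = (2*c) * dist EA C := by
    have := congrArg norm e1
    rw [norm_smul, norm_smul, Real.norm_eq_abs, Real.norm_eq_abs,
      abs_of_pos hpB, abs_of_pos (by linarith : (0:ℝ) < 2*c)] at this
    rw [dist_eq_norm, dist_eq_norm]; exact this
  have hd5 : (-c+a+b) * dist EA EC = (2*b) * dist EA B := by
    have := congrArg norm e5
    rw [norm_smul, norm_smul, Real.norm_eq_abs, Real.norm_eq_abs,
      abs_of_pos hpC, abs_of_pos (by linarith : (0:ℝ) < 2*b)] at this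
    rw [dist_eq_norm, dist_eq_norm]; exact this
  have hdI : (a+b+c) * dist EA I = (2*a) * dist EA A := by
    have := congrArg norm eI
    rw [norm_smul, norm_smul, Real.norm_eq_abs, Real.norm_eq_abs,
      abs_of_pos hs, abs_of_pos (by linarith : (0:ℝ) < 2*a)] at this
    rw [dist_eq_norm, dist_eq_norm]; exact this
  constructor
  · apply mul_left_cancel₀ (ne_of_gt (mul_pos (mul_pos hpB hs) hpA))
    linear_combination ((a+b+c)*(-a+b+c)*(dist EA C)) * hd1 + (2*c*(a+b+c)) * h3
      - ((-b+c+a)*(-a+b+c)*(dist EA A)) * hdI - (2*a*(-b+c+a)) * h4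
  · apply mul_left_cancel₀ (ne_of_gt (mul_pos (mul_pos hpC hs) hpA))
    linear_combination ((-c+a+b)*(-a+b+c)*(dist EA A)) * hdI + (2*a*(-c+a+b)) * h4
      - ((a+b+c)*(-a+b+c)*(dist EA B)) * hd5 - (2*b*(a+b+c)) * h6
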